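/- If K is compact and there exists q ∈ ℝ[x]_A with q > 0 on K, then the truncated moment cone R_A(K) is closed. -/

import Mathlib

open MeasureTheory Finset

/-- The monomial `x^α` for an exponent vector `α : Fin n → ℕ`. -/
noncomputable def mono {n : ℕ} (α : Fin n → ℕ) (x : Fin n → ℝ) : ℝ := ∏ i, x i ^ α i

/-- The polynomial with coefficient vector `c` supported on the finite power set `A`. -/
noncomputable def polyA {n : ℕ} (A : Finset (Fin n → ℕ)) (c : A → ℝ) (x : Fin n → ℝ) : ℝ :=
  ∑ α : A, c α * mono (α : Fin n → ℕ) x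

/-- The truncated moment cone `R_A(K)`: those `y ∈ ℝ^A` admitting a positive Borel
representing measure supported in `K`. -/
def momCone {n : ℕ} (A : Finset (Fin n → ℕ)) (K : Set (Fin n → ℝ)) : Set (A → ℝ) :=
  {y | ∃ μ : Measure (Fin n → ℝ), μ Kᶜ = 0 ∧
      (∀ α : A, Integrable (mono (α : Fin n → ℕ)) μ) ∧
      (∀ α : A, y α = ∫ x, mono (α : Fin n → ℕ) x ∂μ)}

open Module

section hull

theorem aux_sum_pad {E : Type*} [AddCommMonoid E] {k m : ℕ} (hcard : k ≤ m)
    (f : Fin m → E) (hf : ∀ i : Fin m, ¬ ((i : ℕ) < k) → f i = 0) :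
    ∑ i : Fin m, f i = ∑ j : Fin k, f (Fin.castLE hcard j) := by
  classical
  calc ∑ i : Fin m, f i
      = ∑ i ∈ Finset.univ.map (Fin.castLEEmb hcard), f i := by
        refine (Finset.sum_subset (Finset.subset_univ _) ?_).symm
        intro i _ hi
        refine hf i fun h => hi (Finset.mem_map.mpr ⟨⟨i, h⟩, Finset.mem_univ _, rfl⟩)
    _ = ∑ j : Fin k, f (Fin.castLE hcard j) := Finset.sum_map _ _ _

theorem aux_isCompact_convexHull {E : Type*} [NormedAddCommGroup E] [NormedSpace ℝ E]
    [FiniteDimensional ℝ E] {V : Set E} (hV : IsCompact V) :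
    IsCompact (convexHull ℝ V) := by
  classical
  set m := finrank ℝ E + 1 with hm
  set g : (Fin m → ℝ) × (Fin m → E) → E := fun p => ∑ i, p.1 i • p.2 i with hg
  have hgc : Continuous g := by
    apply continuous_finset_sum
    intro i _
    exact ((continuous_apply i).comp continuous_fst).smul
      ((continuous_apply i).comp continuous_snd)
  have hD : IsCompact ((stdSimplex ℝ (Fin m)) ×ˢ (Set.univ.pi fun _ : Fin m => V)) :=
    (isCompact_stdSimplex ℝ (Fin m)).prod (isCompact_univ_pi fun _ => hV)
  have key : convexHull ℝ V = g '' ((stdSimplex ℝ (Fin m)) ×ˢ (Set.univ.pi fun _ : Fin m => V)) := by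
    apply Set.Subset.antisymm
    · intro x hx
      rw [convexHull_eq_union] at hx
      simp only [Set.mem_iUnion] at hx
      obtain ⟨t, hts, hai, hxt⟩ := hx
      rw [Finset.convexHull_eq] at hxt
      obtain ⟨w, hw0, hw1, hwx⟩ := hxt
      rw [Finset.centerMass_eq_of_sum_1 _ _ hw1] at hwx
      have htne : t.Nonempty := by
        rcases t.eq_empty_or_nonempty with h | h
        · subst h; simp at hw1
        · exact h
      have hcard : t.card ≤ m := by
        have h1 := hai.card_le_finrank_succ
        rw [Fintype.card_coe] at h1
        exact h1.trans (by
          have := Submodule.finrank_le (vectorSpan ℝ (Set.range ((↑) : t → E)))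
          omega)
      set k := t.card with hk
      set σ : Fin k → E := fun j => (t.equivFin.symm j : E) with hσ
      obtain ⟨y₀, hy₀⟩ := htne
      set W : Fin m → ℝ := fun i => if h : (i : ℕ) < k then w (σ ⟨i, h⟩) else 0 with hW
      set Z : Fin m → E := fun i => if h : (i : ℕ) < k then σ ⟨i, h⟩ else y₀ with hZ
      have hσmem : ∀ j, σ j ∈ t := fun j => (t.equivFin.symm j).2
      refine ⟨⟨W, Z⟩, ⟨⟨fun i => ?_, ?_⟩, fun i _ => ?_⟩, ?_⟩
      · by_cases h : (i : ℕ) < k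
        · rw [hW]; simp only; rw [dif_pos h]; exact hw0 _ (hσmem _)
        · rw [hW]; simp only; rw [dif_neg h]
      · have hWsum : ∑ i : Fin m, W i = ∑ y ∈ t, w y := by
          rw [hW]
          rw [aux_sum_pad hcard _ (fun i hi => dif_neg hi)]
          have h2 : ∀ j : Fin k, (if h : ((Fin.castLE hcard j : Fin m) : ℕ) < k
              then w (σ ⟨(Fin.castLE hcard j : Fin m), h⟩) else 0) = w (σ j) := fun j =>
            dif_pos (by simpa using j.isLt)
          rw [Finset.sum_congr rfl (fun j _ => h2 j)]
          rw [← Finset.sum_coe_sort t w]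
          exact Fintype.sum_equiv t.equivFin.symm _ _ (fun j => rfl)
        rw [hWsum, hw1]
      · rw [hZ]; simp only
        by_cases h : (i : ℕ) < k
        · rw [dif_pos h]; exact hts (hσmem _)
        · rw [dif_neg h]; exact hts hy₀
      · rw [hg]
        simp only
        have hterm : ∀ i : Fin m, W i • Z i
            = (if h : (i : ℕ) < k then w (σ ⟨i, h⟩) • σ ⟨i, h⟩ else 0) := by
          intro i
          rw [hW, hZ]
          by_cases h : (i : ℕ) < k
          · simp only [dif_pos h]
          · simp only [dif_neg h, zero_smul]
        rw [Finset.sum_congr rfl (fun i _ => hterm i)]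
        rw [aux_sum_pad hcard _ (fun i hi => dif_neg hi)]
        have h2 : ∀ j : Fin k, (if h : ((Fin.castLE hcard j : Fin m) : ℕ) < k
            then w (σ ⟨(Fin.castLE hcard j : Fin m), h⟩) • σ ⟨(Fin.castLE hcard j : Fin m), h⟩
            else 0) = w (σ j) • σ j := fun j => dif_pos (by simpa using j.isLt)
        rw [Finset.sum_congr rfl (fun j _ => h2 j)]
        rw [← hwx, ← Finset.sum_coe_sort t (fun y => w y • id y)]
        exact Fintype.sum_equiv t.equivFin.symm _ _ (fun j => rfl)
    · rintro x ⟨⟨w, z⟩, ⟨hw, hz⟩, rfl⟩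
      exact (convex_convexHull ℝ V).sum_mem (fun i _ => hw.1 i) hw.2
        (fun i _ => subset_convexHull ℝ V (hz i (Set.mem_univ i)))
  rw [key]
  exact hD.image hgc

end hull

section pieces

variable {n : ℕ} (A : Finset (Fin n → ℕ)) (K : Set (Fin n → ℝ))

theorem mono_continuous (α : Fin n → ℕ) : Continuous (mono α) := by
  unfold mono
  exact continuous_finset_prod _ fun i _ => (continuous_apply i).pow _

/-- the moment map -/
noncomputable def vmap : (Fin n → ℝ) → (A → ℝ) := fun x α => mono (α : Fin n → ℕ) x

theorem vmap_continuous : Continuous (vmap A) :=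
  continuous_pi fun α => mono_continuous _

theorem momCone_zero_mem : (0 : A → ℝ) ∈ momCone A K := by
  refine ⟨0, by simp, fun α => integrable_zero_measure, fun α => by simp⟩

theorem momCone_add {y₁ y₂ : A → ℝ} (h₁ : y₁ ∈ momCone A K) (h₂ : y₂ ∈ momCone A K) :
    y₁ + y₂ ∈ momCone A K := by
  obtain ⟨μ₁, hμ₁, hint₁, hmom₁⟩ := h₁
  obtain ⟨μ₂, hμ₂, hint₂, hmom₂⟩ := h₂
  refine ⟨μ₁ + μ₂, by simp [hμ₁, hμ₂], fun α => (hint₁ α).add_measure (hint₂ α), fun α => ?_⟩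
  rw [integral_add_measure (hint₁ α) (hint₂ α)]
  simp [hmom₁ α, hmom₂ α]

theorem momCone_smul {y : A → ℝ} {t : ℝ} (ht : 0 ≤ t) (h : y ∈ momCone A K) :
    t • y ∈ momCone A K := by
  obtain ⟨μ, hμ, hint, hmom⟩ := h
  refine ⟨ENNReal.ofReal t • μ, by simp [hμ], fun α => (hint α).smul_measure ENNReal.ofReal_ne_top,
    fun α => ?_⟩
  rw [integral_smul_measure, ENNReal.toReal_ofReal ht]
  simp [hmom α, smul_eq_mul]

theorem momCone_dirac (hK : IsCompact K) {x : Fin n → ℝ} (hx : x ∈ K) :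
    vmap A x ∈ momCone A K := by
  have hmeas : MeasurableSet Kᶜ := hK.isClosed.measurableSet.compl
  refine ⟨Measure.dirac x, ?_, fun α => ?_, fun α => ?_⟩
  · rw [Measure.dirac_apply' x hmeas]
    simp [Set.indicator_of_notMem, hx]
  · refine ⟨(mono_continuous (α : Fin n → ℕ)).aestronglyMeasurable, ?_⟩
    unfold HasFiniteIntegral
    rw [lintegral_dirac' x ((mono_continuous (α : Fin n → ℕ)).measurable.enorm)]
    exact enorm_lt_top
  · rw [integral_dirac]
    rfl

theorem momCone_convex : Convex ℝ (momCone A K) := by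
  intro y₁ h₁ y₂ h₂ a b ha hb hab
  exact momCone_add A K (momCone_smul A K ha h₁) (momCone_smul A K hb h₂)

end pieces

section main

variable {n : ℕ} (A : Finset (Fin n → ℕ)) (K : Set (Fin n → ℝ))

theorem momCone_rep (hK : IsCompact K) (q : A → ℝ) (hq : ∀ x ∈ K, 0 < polyA A q x)
    {y : A → ℝ} (hy : y ∈ momCone A K) :
    y = 0 ∨ ∃ t : ℝ, 0 ≤ t ∧ ∃ c ∈ convexHull ℝ (vmap A '' K), y = t • c := by
  classical
  obtain ⟨μ, hμK, hint, hmom⟩ := hy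
  rcases K.eq_empty_or_nonempty with hKe | hKne
  · -- μ = 0
    left
    have hμ0 : μ = 0 := by
      rw [← Measure.measure_univ_eq_zero, ← Set.compl_empty, ← hKe]
      exact hμK
    funext α
    rw [hmom α, hμ0, integral_zero_measure]; rfl
  · obtain ⟨x₀, hx₀, hmin'⟩ := hK.exists_isMinOn hKne
      ((continuous_finset_sum _ fun α _ => (continuous_const.mul (mono_continuous _))).continuousOn :
        ContinuousOn (polyA A q) K)
    set ε := polyA A q x₀ with hε
    have hmin : ∀ x ∈ K, ε ≤ polyA A q x := fun x hx => hmin' hx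
    have hεpos : 0 < ε := hq x₀ hx₀
    have haeK : ∀ᵐ x ∂μ, x ∈ K := by
      rw [MeasureTheory.ae_iff]
      simpa [Set.compl_def] using hμK
    have hqint : Integrable (polyA A q) μ := by
      unfold polyA
      exact integrable_finset_sum _ fun α _ => (hint α).const_mul (q α)
    have hfin : IsFiniteMeasure μ := by
      constructor
      have h1 : ENNReal.ofReal ε * μ Set.univ ≤ ∫⁻ x, ‖polyA A q x‖₊ ∂μ := by
        rw [← MeasureTheory.lintegral_const]
        refine lintegral_mono_ae ?_
        filter_upwards [haeK] with x hx
        rw [← enorm_eq_nnnorm, ← ofReal_norm]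
        exact ENNReal.ofReal_le_ofReal ((hmin x hx).trans (le_abs_self _))
      have h2 := hqint.2
      unfold HasFiniteIntegral at h2
      have h3 : ENNReal.ofReal ε * μ Set.univ ≠ ⊤ := (h1.trans_lt h2).ne
      exact ENNReal.lt_top_of_mul_ne_top_right h3
        (ENNReal.ofReal_pos.mpr hεpos).ne'
    rcases eq_or_ne μ 0 with hμ0 | hμ0
    · left
      funext α
      rw [hmom α, hμ0, integral_zero_measure]; rfl
    · right
      haveI : NeZero μ := ⟨hμ0⟩
      have hveq : vmap A = fun x => ∑ α : A, Pi.single α (mono (α : Fin n → ℕ) x) := by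
        funext x
        exact (Finset.univ_sum_single (vmap A x)).symm
      have hvint : Integrable (vmap A) μ := by
        rw [hveq]
        refine integrable_finset_sum _ fun α _ => ?_
        exact ((LinearMap.single ℝ (fun _ : A => ℝ) α).toContinuousLinearMap).integrable_comp
          (hint α)
      have hcC : (⨍ x, vmap A x ∂μ) ∈ convexHull ℝ (vmap A '' K) := by
        refine (convex_convexHull ℝ _).average_mem
          (aux_isCompact_convexHull (hK.image (vmap_continuous A))).isClosed ?_ hvint
        filter_upwards [haeK] with x hx
        exact subset_convexHull ℝ _ ⟨x, hx, rfl⟩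
      refine ⟨(μ Set.univ).toReal, ENNReal.toReal_nonneg, _, hcC, ?_⟩
      have hy' : y = ∫ x, vmap A x ∂μ := by
        funext α
        rw [hmom α]
        have h := ContinuousLinearMap.integral_comp_comm
          (ContinuousLinearMap.proj (R := ℝ) (φ := fun _ : A => ℝ) α) hvint
        simp only [ContinuousLinearMap.proj_apply] at h
        unfold vmap at h
        exact h
      have htne : (μ Set.univ).toReal ≠ 0 := by
        rw [Ne, ENNReal.toReal_eq_zero_iff]
        push_neg
        exact ⟨fun h => hμ0 (Measure.measure_univ_eq_zero.mp h), measure_ne_top μ _⟩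
      rw [MeasureTheory.average_eq, smul_smul, measureReal_def, mul_inv_cancel₀ htne, one_smul, hy']

end main

section closed

variable {n : ℕ} (A : Finset (Fin n → ℕ)) (K : Set (Fin n → ℝ))

theorem S_closed (hK : IsCompact K) (q : A → ℝ) (hq : ∀ x ∈ K, 0 < polyA A q x) :
    IsClosed {y : A → ℝ | y = 0 ∨ ∃ t : ℝ, 0 ≤ t ∧
      ∃ c ∈ convexHull ℝ (vmap A '' K), y = t • c} := by
  classical
  rcases K.eq_empty_or_nonempty with hKe | hKne
  · have : {y : A → ℝ | y = 0 ∨ ∃ t : ℝ, 0 ≤ t ∧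
        ∃ c ∈ convexHull ℝ (vmap A '' K), y = t • c} = {0} := by
      ext y
      simp [hKe]
    rw [this]
    exact isClosed_singleton
  · set C := convexHull ℝ (vmap A '' K) with hC
    have hCcpt : IsCompact C := aux_isCompact_convexHull (hK.image (vmap_continuous A))
    set ℓ : (A → ℝ) → ℝ := fun y => ∑ α : A, q α * y α with hℓ
    have hℓcont : Continuous ℓ :=
      continuous_finset_sum _ fun α _ => continuous_const.mul (continuous_apply α)
    have hℓsmul : ∀ (t : ℝ) (c : A → ℝ), ℓ (t • c) = t * ℓ c := by
      intro t c
      rw [hℓ]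
      simp only [Pi.smul_apply, smul_eq_mul, Finset.mul_sum]
      exact Finset.sum_congr rfl fun α _ => by ring
    obtain ⟨x₀, hx₀, hmin'⟩ := hK.exists_isMinOn hKne
      ((continuous_finset_sum _ fun α _ => (continuous_const.mul (mono_continuous _))).continuousOn :
        ContinuousOn (polyA A q) K)
    set ε := polyA A q x₀ with hε
    have hmin : ∀ x ∈ K, ε ≤ polyA A q x := fun x hx => hmin' hx
    have hεpos : 0 < ε := hq x₀ hx₀
    have hℓC : ∀ c ∈ C, ε ≤ ℓ c := by
      have hconv : Convex ℝ {c : A → ℝ | ε ≤ ℓ c} := by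
        intro u hu w hw a b ha hb hab
        have hlin : ℓ (a • u + b • w) = a * ℓ u + b * ℓ w := by
          rw [hℓ]
          simp only [Pi.add_apply, Pi.smul_apply, smul_eq_mul, Finset.mul_sum,
            Finset.sum_add_distrib.symm]
          exact Finset.sum_congr rfl fun α _ => by ring
        have : ε ≤ a * ℓ u + b * ℓ w := by
          calc ε = a * ε + b * ε := by rw [← add_mul, hab, one_mul]
          _ ≤ a * ℓ u + b * ℓ w :=
            add_le_add (mul_le_mul_of_nonneg_left hu ha) (mul_le_mul_of_nonneg_left hw hb)
        simpa [hlin] using this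
      intro c hc
      refine convexHull_min ?_ hconv hc
      rintro _ ⟨x, hx, rfl⟩
      exact hmin x hx
    refine IsSeqClosed.isClosed ?_
    intro u y hu huy
    have hc₀ : vmap A x₀ ∈ C := subset_convexHull ℝ _ ⟨x₀, hx₀, rfl⟩
    have hex : ∀ k : ℕ, ∃ t : ℝ, ∃ c : A → ℝ, 0 ≤ t ∧ c ∈ C ∧ u k = t • c := by
      intro k
      rcases hu k with h0 | ⟨t, ht, c, hc, he⟩
      · exact ⟨0, vmap A x₀, le_refl 0, hc₀, by rw [h0, zero_smul]⟩
      · exact ⟨t, c, ht, hc, he⟩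
    choose t c ht hc he using hex
    have hℓu : Filter.Tendsto (fun k => ℓ (u k)) Filter.atTop (nhds (ℓ y)) :=
      (hℓcont.tendsto y).comp huy
    obtain ⟨B, hB⟩ := hℓu.bddAbove_range
    have htB : ∀ k, t k ≤ B / ε := by
      intro k
      have h1 : ℓ (u k) = t k * ℓ (c k) := by rw [he k, hℓsmul]
      have h2 : t k * ε ≤ B := by
        calc t k * ε ≤ t k * ℓ (c k) :=
          mul_le_mul_of_nonneg_left (hℓC _ (hc k)) (ht k)
        _ = ℓ (u k) := h1.symm
        _ ≤ B := hB (Set.mem_range_self k)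
      exact (le_div_iff₀ hεpos).mpr h2
    set T := max 0 (B / ε) with hT
    have hp : ∀ k, (t k, c k) ∈ (Set.Icc (0:ℝ) T) ×ˢ C := by
      intro k
      exact ⟨⟨ht k, (htB k).trans (le_max_right _ _)⟩, hc k⟩
    obtain ⟨⟨tl, cl⟩, hmem, φ, hφmono, hφlim⟩ :=
      ((isCompact_Icc).prod hCcpt).tendsto_subseq hp
    have hta : Filter.Tendsto (fun k => t (φ k)) Filter.atTop (nhds tl) :=
      (continuous_fst.tendsto _).comp hφlim
    have hca : Filter.Tendsto (fun k => c (φ k)) Filter.atTop (nhds cl) :=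
      (continuous_snd.tendsto _).comp hφlim
    have h1 : Filter.Tendsto (fun k => u (φ k)) Filter.atTop (nhds (tl • cl)) := by
      have := hta.smul hca
      refine this.congr fun k => ?_
      rw [he (φ k)]
    have h2 : Filter.Tendsto (fun k => u (φ k)) Filter.atTop (nhds y) :=
      huy.comp (hφmono.tendsto_atTop)
    have hy : y = tl • cl := tendsto_nhds_unique h2 h1
    exact Or.inr ⟨tl, hmem.1.1, cl, hmem.2, hy⟩

end closed

/-- if `K` is compact and some polynomial supported on `A` is strictly positive
on `K`, then the truncated moment cone `R_A(K)` is closed. -/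
theorem stmt3 {n : ℕ} (A : Finset (Fin n → ℕ)) (K : Set (Fin n → ℝ)) (hK : IsCompact K)
    (q : A → ℝ) (hq : ∀ x ∈ K, 0 < polyA A q x) :
    IsClosed (momCone A K) := by
  have hset : momCone A K = {y : A → ℝ | y = 0 ∨ ∃ t : ℝ, 0 ≤ t ∧
      ∃ c ∈ convexHull ℝ (vmap A '' K), y = t • c} := by
    ext y
    constructor
    · exact momCone_rep A K hK q hq
    · rintro (rfl | ⟨t, ht, c, hc, rfl⟩)
      · exact momCone_zero_mem A K
      · refine momCone_smul A K ht ?_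
        refine convexHull_min ?_ (momCone_convex A K) hc
        rintro _ ⟨x, hx, rfl⟩
        exact momCone_dirac A K hK hx
  rw [hset]
  exact S_closed A K hK q hq
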